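/- For σ ≥ 0 and k ∈ ℤ define H_σ(k) = i·k·e^{−k²σ} ∈ ℂ. For σ > 0 and k₁ ∈ ℤ set V(σ, k₁) = (1/2) ∑_{k₂ ∈ ℤ, k₂ ≠ 0} H_σ(k₁ + k₂) · e^{−k₂² σ} (the series converges absolutely for each σ > 0). Then for every ε ∈ (0, 1] there exists a constant C > 0 such that for all k₁ ∈ ℤ with k₁ ≠ 0 one has ∫₀^∞ |V(σ, k₁)| dσ ≤ C · |k₁|^ε, where |·| denotes the complex modulus. -/

import Mathlib

open MeasureTheory Real Set


/-- The kernel `H_σ(k) = i k e^{-k² σ}`. -/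
noncomputable def Hker (σ : ℝ) (k : ℤ) : ℂ :=
  Complex.I * (k : ℂ) * Complex.exp (-(k : ℂ) ^ 2 * (σ : ℂ))

/-- The vertex function `V(σ, k₁) = (1/2) ∑_{k₂ ≠ 0} H_σ(k₁ + k₂) e^{-k₂² σ}`. -/
noncomputable def Vfun (σ : ℝ) (k₁ : ℤ) : ℂ :=
  (1/2 : ℂ) * ∑' k₂ : ℤ,
    (if k₂ ≠ 0 then Hker σ (k₁ + k₂) * Complex.exp (-(k₂ : ℂ) ^ 2 * (σ : ℂ)) else 0)

lemma sum_aux (σ c : ℝ) (hσ : 0 < σ) (hc : 0 ≤ c) :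
    Summable (fun k : ℤ => (|(k:ℝ)| + c) * Real.exp (-(k:ℝ)^2*σ)) := by
  have hr : ‖Real.exp (-σ)‖ < 1 := by
    rw [Real.norm_eq_abs, abs_of_pos (Real.exp_pos _)]
    exact Real.exp_lt_one_iff.mpr (by linarith)
  have key : Summable (fun n : ℕ => ((n:ℝ) + c) * Real.exp (-(n:ℝ)^2*σ)) := by
    refine Summable.of_nonneg_of_le (fun n => by positivity) (fun n => ?_)
      (((summable_pow_mul_geometric_of_norm_lt_one 1 hr).add
        ((summable_geometric_of_lt_one (Real.exp_pos _).le
          (by rwa [Real.norm_eq_abs, abs_of_pos (Real.exp_pos _)] at hr)).mul_left c)))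
    have h1 : Real.exp (-(n:ℝ)^2*σ) ≤ Real.exp (-σ) ^ n := by
      rw [← Real.exp_nat_mul]
      apply Real.exp_le_exp.mpr
      have : (n:ℝ) ≤ (n:ℝ)^2 := by exact_mod_cast Nat.le_self_pow two_ne_zero n
      nlinarith
    calc ((n:ℝ) + c) * Real.exp (-(n:ℝ)^2*σ) ≤ ((n:ℝ) + c) * Real.exp (-σ)^n :=
          mul_le_mul_of_nonneg_left h1 (by positivity)
      _ = (n:ℝ)^1 * Real.exp (-σ)^n + c * Real.exp (-σ)^n := by ring
  apply Summable.of_nat_of_neg <;> · convert key using 2 with n; exacts [rfl, by simp [abs_neg, Nat.abs_cast]]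

lemma norm_term (σ : ℝ) (j k : ℤ) :
    ‖Hker σ j * Complex.exp (-(k:ℂ)^2*(σ:ℂ))‖
      = |(j:ℝ)| * Real.exp (-((j:ℝ)^2 + (k:ℝ)^2) * σ) := by
  have e1 : (-(j:ℂ)^2*(σ:ℂ)) = ((-(j:ℝ)^2*σ : ℝ):ℂ) := by push_cast; ring
  have e2 : (-(k:ℂ)^2*(σ:ℂ)) = ((-(k:ℝ)^2*σ : ℝ):ℂ) := by push_cast; ring
  rw [Hker, e1, e2, ← Complex.ofReal_exp, ← Complex.ofReal_exp]
  simp only [norm_mul, Complex.norm_I, one_mul, Complex.norm_real, Real.norm_eq_abs,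
    abs_of_pos (Real.exp_pos _), ← Real.exp_add]
  rw [show ‖(j:ℂ)‖ = |(j:ℝ)| by rw [← Complex.ofReal_intCast, Complex.norm_real, Real.norm_eq_abs]]
  rw [mul_assoc, ← Real.exp_add]
  ring_nf

/-- summability of the norms of the defining series -/
lemma sum_norm (σ : ℝ) (hσ : 0 < σ) (k₁ : ℤ) : Summable (fun k₂ : ℤ =>
    ‖(if k₂ ≠ 0 then Hker σ (k₁ + k₂) * Complex.exp (-(k₂ : ℂ) ^ 2 * (σ : ℂ)) else 0)‖) := by
  refine Summable.of_nonneg_of_le (fun k₂ => norm_nonneg _) (fun k₂ => ?_)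
    (sum_aux σ |(k₁:ℝ)| hσ (abs_nonneg _))
  by_cases h : k₂ = 0
  · simp only [h, ne_eq, not_true_eq_false, if_false, norm_zero]
    positivity
  · rw [if_pos h, norm_term]
    have h1 : |((k₁+k₂:ℤ):ℝ)| ≤ |(k₂:ℝ)| + |(k₁:ℝ)| := by
      push_cast; rw [add_comm (|(k₂:ℝ)|)]; exact abs_add_le _ _
    have h2 : Real.exp (-(((k₁+k₂:ℤ):ℝ)^2 + (k₂:ℝ)^2)*σ) ≤ Real.exp (-(k₂:ℝ)^2*σ) := by
      apply Real.exp_le_exp.mpr; nlinarith [sq_nonneg ((k₁:ℝ)+(k₂:ℝ)), hσ.le,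
        mul_nonneg (sq_nonneg ((k₁+k₂:ℤ):ℝ)) hσ.le]
    exact mul_le_mul h1 h2 (Real.exp_pos _).le (by positivity)

noncomputable def gfun (σ : ℝ) (k₁ k₂ : ℤ) : ℝ :=
  Real.exp (-(((k₁:ℝ)+(k₂:ℝ))^2+(k₂:ℝ)^2)*σ)

lemma sum_g (σ : ℝ) (hσ : 0 < σ) (k₁ : ℤ) : Summable (fun k₂ : ℤ => gfun σ k₁ k₂) := by
  refine Summable.of_nonneg_of_le (fun k₂ => (Real.exp_pos _).le) (fun k₂ => ?_)
    (sum_aux σ 1 hσ zero_le_one)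
  have h2 : gfun σ k₁ k₂ ≤ Real.exp (-(k₂:ℝ)^2*σ) := by
    apply Real.exp_le_exp.mpr
    nlinarith [mul_nonneg (sq_nonneg ((k₁:ℝ)+(k₂:ℝ))) hσ.le]
  calc gfun σ k₁ k₂ ≤ Real.exp (-(k₂:ℝ)^2*σ) := h2
    _ ≤ (|(k₂:ℝ)| + 1) * Real.exp (-(k₂:ℝ)^2*σ) := by
        nlinarith [Real.exp_pos (-(k₂:ℝ)^2*σ), abs_nonneg ((k₂:ℝ))]

set_option maxHeartbeats 1000000 in
lemma keybound (σ : ℝ) (hσ : 0 < σ) (k₁ : ℤ) :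
    ‖Vfun σ k₁‖ ≤ (|(k₁:ℝ)|/4) * ∑' k₂ : ℤ, gfun σ k₁ k₂ := by
  set T : ℤ → ℂ := fun k₂ =>
    if k₂ ≠ 0 then Hker σ (k₁ + k₂) * Complex.exp (-(k₂ : ℂ) ^ 2 * (σ : ℂ)) else 0 with hTdef
  have hTn : Summable (fun k₂ => ‖T k₂‖) := sum_norm σ hσ k₁
  have hT : Summable T := hTn.of_norm
  let e : ℤ ≃ ℤ := Equiv.subLeft (-k₁)
  have hTe : Summable (fun k₂ => T (-k₁-k₂)) := by
    have := e.summable_iff.mpr hT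
    simpa only [e, Equiv.subLeft_apply, Function.comp_def] using this
  have hTne : Summable (fun k₂ => ‖T (-k₁-k₂)‖) := by
    have := e.summable_iff.mpr hTn
    simpa only [e, Equiv.subLeft_apply, Function.comp_def] using this
  -- zero values
  have hT0 : T 0 = 0 := by simp [hTdef]
  have hTm : T (-k₁) = 0 := by
    by_cases hk : k₁ = 0
    · simp [hk, hTdef]
    · simp only [hTdef, if_pos (neg_ne_zero.mpr hk), add_neg_cancel]
      simp [Hker]
  -- pointwise bound
  have hW : ∀ k₂ : ℤ, ‖T k₂ + T (-k₁ - k₂)‖ ≤ |(k₁:ℝ)| * gfun σ k₁ k₂ := by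
    intro k₂
    by_cases h0 : k₂ = 0
    · rw [h0]; simp only [sub_zero, hT0, hTm, add_zero, norm_zero]
      exact mul_nonneg (abs_nonneg _) (Real.exp_pos _).le
    by_cases h1 : k₂ = -k₁
    · rw [h1]; simp only [sub_neg_eq_add, neg_add_cancel, hTm, hT0, add_zero, norm_zero]
      exact mul_nonneg (abs_nonneg _) (Real.exp_pos _).le
    · have h2 : -k₁ - k₂ ≠ 0 := by omega
      have key : T k₂ + T (-k₁ - k₂)
          = Complex.I * (k₁:ℂ) * ((Real.exp (-(((k₁:ℝ)+(k₂:ℝ))^2)*σ) : ℝ) *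
              (Real.exp (-((k₂:ℝ)^2)*σ) : ℝ)) := by
        rw [hTdef]
        simp only [if_pos h0, if_pos h2, Hker]
        have E1 : Complex.exp (-((k₁+k₂:ℤ):ℂ)^2*(σ:ℂ))
            = ((Real.exp (-(((k₁:ℝ)+(k₂:ℝ))^2)*σ) : ℝ):ℂ) := by
          rw [Complex.ofReal_exp]; congr 1; push_cast; ring
        have E2 : Complex.exp (-((k₂:ℤ):ℂ)^2*(σ:ℂ))
            = ((Real.exp (-((k₂:ℝ)^2)*σ) : ℝ):ℂ) := by
          rw [Complex.ofReal_exp]; congr 1; push_cast; ring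
        have E3 : Complex.exp (-((k₁ + (-k₁-k₂):ℤ):ℂ)^2*(σ:ℂ))
            = ((Real.exp (-((k₂:ℝ)^2)*σ) : ℝ):ℂ) := by
          rw [Complex.ofReal_exp]; congr 1; push_cast; ring
        have E4 : Complex.exp (-((-k₁-k₂:ℤ):ℂ)^2*(σ:ℂ))
            = ((Real.exp (-(((k₁:ℝ)+(k₂:ℝ))^2)*σ) : ℝ):ℂ) := by
          rw [Complex.ofReal_exp]; congr 1; push_cast; ring
        rw [E1, E2, E3, E4]
        push_cast
        ring
      rw [key]
      rw [norm_mul, norm_mul, Complex.norm_I, one_mul,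
        show ‖(k₁:ℂ)‖ = |(k₁:ℝ)| by
          rw [← Complex.ofReal_intCast, Complex.norm_real, Real.norm_eq_abs],
        norm_mul, Complex.norm_real, Complex.norm_real, Real.norm_eq_abs, Real.norm_eq_abs,
        abs_of_pos (Real.exp_pos _), abs_of_pos (Real.exp_pos _), ← Real.exp_add]
      apply le_of_eq
      congr 2
      ring
  have hWsum : Summable (fun k₂ => ‖T k₂ + T (-k₁ - k₂)‖) := by
    refine Summable.of_nonneg_of_le (fun k₂ => norm_nonneg _) (fun k₂ => norm_add_le _ _)
      (hTn.add hTne)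
  -- the rearrangement identity
  have hEq : ∑' k₂, (T k₂ + T (-k₁ - k₂)) = 2 * ∑' k₂, T k₂ := by
    rw [Summable.tsum_add hT hTe]
    have h5 : ∑' k₂, T (-k₁ - k₂) = ∑' k₂, T k₂ := by
      have := e.tsum_eq T
      simpa only [e, Equiv.subLeft_apply, Function.comp_def] using this
    rw [h5]; ring
  have hnorm : ‖Vfun σ k₁‖ = (1/4 : ℝ) * ‖∑' k₂, (T k₂ + T (-k₁ - k₂))‖ := by
    have hv : Vfun σ k₁ = (1/2 : ℂ) * ∑' k₂, T k₂ := rfl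
    rw [hv, hEq, norm_mul, norm_mul]
    rw [show ‖(1/2:ℂ)‖ = 1/2 by norm_num, show ‖(2:ℂ)‖ = 2 by norm_num]
    ring
  rw [hnorm]
  calc (1/4 : ℝ) * ‖∑' k₂, (T k₂ + T (-k₁ - k₂))‖
      ≤ (1/4 : ℝ) * ∑' k₂, ‖T k₂ + T (-k₁ - k₂)‖ := by
        gcongr; exact norm_tsum_le_tsum_norm hWsum
    _ ≤ (1/4 : ℝ) * ∑' k₂, |(k₁:ℝ)| * gfun σ k₁ k₂ := by
        refine mul_le_mul_of_nonneg_left ?_ (by norm_num)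
        exact Summable.tsum_le_tsum hW hWsum ((sum_g σ hσ k₁).mul_left _)
    _ = (|(k₁:ℝ)|/4) * ∑' k₂, gfun σ k₁ k₂ := by
        rw [tsum_mul_left]; ring

lemma lint_exp (a : ℝ) (ha : 0 < a) :
    ∫⁻ σ in Set.Ioi (0:ℝ), ENNReal.ofReal (Real.exp (-a * σ)) = ENNReal.ofReal (1/a) := by
  rw [← ofReal_integral_eq_lintegral_ofReal ((exp_neg_integrableOn_Ioi 0 ha))
    (Filter.Eventually.of_forall fun x => (Real.exp_pos _).le)]
  congr 1
  have := integral_exp_neg_mul_rpow (p := 1) (b := a) one_pos ha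
  simp only [Real.rpow_one] at this
  rw [this]
  rw [show (-1/1 : ℝ) = -1 by norm_num, Real.rpow_neg_one]
  norm_num [Real.Gamma_two]


lemma interp (ε : ℝ) (hε0 : 0 < ε) (hε1 : ε ≤ 1) (k₁ k₂ : ℤ) (hk₁ : k₁ ≠ 0) :
    1/(((k₁:ℝ)+(k₂:ℝ))^2+(k₂:ℝ)^2) ≤
      2*|(k₁:ℝ)|^(ε-1) * (|(k₂:ℝ)|^(-(1+ε)) + (if k₂ = 0 then (1:ℝ) else 0)) := by
  have hx : (1:ℝ) ≤ |(k₁:ℝ)| := by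
    rw [← Int.cast_abs]; exact_mod_cast Int.one_le_abs hk₁
  have hx0 : (0:ℝ) < |(k₁:ℝ)| := by linarith
  set x := |(k₁:ℝ)| with hxdef
  set a := ((k₁:ℝ)+(k₂:ℝ))^2+(k₂:ℝ)^2 with hadef
  have ha2 : x^2/2 ≤ a := by
    rw [hxdef, sq_abs, hadef]; nlinarith [sq_nonneg ((k₁:ℝ)+2*(k₂:ℝ))]
  have ha : 0 < a := by nlinarith
  by_cases h : k₂ = 0
  · rw [if_pos h, h]
    rw [show ((0:ℤ):ℝ) = 0 by norm_cast, abs_zero,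
      Real.zero_rpow (by linarith : -(1+ε) ≠ 0), zero_add, mul_one]
    have h1 : x^(-2:ℝ) ≤ x^(ε-1) := Real.rpow_le_rpow_of_exponent_le hx (by linarith)
    have h2 : x^(-2:ℝ) = 1/x^2 := by
      rw [Real.rpow_neg hx0.le, show ((2:ℝ)) = ((2:ℕ):ℝ) by norm_num, Real.rpow_natCast]
      rw [one_div]
    have ha' : a = x^2 := by rw [hadef, hxdef, sq_abs, h]; push_cast; ring
    rw [ha']
    calc 1/x^2 = x^(-2:ℝ) := h2.symm
      _ ≤ x^(ε-1) := h1
      _ ≤ 2*x^(ε-1) := by nlinarith [Real.rpow_pos_of_pos hx0 (ε-1)]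
  · rw [if_neg h, add_zero]
    have hy : (1:ℝ) ≤ |(k₂:ℝ)| := by
      rw [← Int.cast_abs]; exact_mod_cast Int.one_le_abs h
    have hy0 : (0:ℝ) < |(k₂:ℝ)| := by linarith
    set y := |(k₂:ℝ)| with hydef
    have hy2 : y^2 ≤ a := by rw [hydef, sq_abs, hadef]; nlinarith [sq_nonneg ((k₁:ℝ)+(k₂:ℝ))]
    -- key interpolation inequality
    have e1 : x^(1-ε) = (x^2)^((1-ε)/2) := by
      rw [← Real.rpow_natCast x 2, ← Real.rpow_mul hx0.le]; congr 1; ring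
    have e2 : y^(1+ε) = (y^2)^((1+ε)/2) := by
      rw [← Real.rpow_natCast y 2, ← Real.rpow_mul hy0.le]; congr 1; ring
    have key : x^(1-ε) * y^(1+ε) ≤ 2*a := by
      have h1 : (x^2)^((1-ε)/2) ≤ (2*a)^((1-ε)/2) :=
        Real.rpow_le_rpow (sq_nonneg x) (by linarith) (by linarith)
      have h2 : (y^2)^((1+ε)/2) ≤ a^((1+ε)/2) :=
        Real.rpow_le_rpow (sq_nonneg y) hy2 (by linarith)
      have h3 : (2*a)^((1-ε)/2) * a^((1+ε)/2) = 2^((1-ε)/2) * a := by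
        rw [Real.mul_rpow (by norm_num) ha.le, mul_assoc, ← Real.rpow_add ha,
          show (1-ε)/2+(1+ε)/2 = (1:ℝ) by ring, Real.rpow_one]
      have h4 : (2:ℝ)^((1-ε)/2) ≤ 2 := by
        calc (2:ℝ)^((1-ε)/2) ≤ (2:ℝ)^(1:ℝ) :=
              Real.rpow_le_rpow_of_exponent_le one_le_two (by linarith)
          _ = 2 := Real.rpow_one 2
      calc x^(1-ε) * y^(1+ε) = (x^2)^((1-ε)/2) * (y^2)^((1+ε)/2) := by rw [e1, e2]
        _ ≤ (2*a)^((1-ε)/2) * a^((1+ε)/2) := by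
            apply mul_le_mul h1 h2 (Real.rpow_nonneg (sq_nonneg y) _)
              (Real.rpow_nonneg (by positivity) _)
        _ = 2^((1-ε)/2) * a := h3
        _ ≤ 2*a := mul_le_mul_of_nonneg_right h4 ha.le
    have hxp : 0 < x^(1-ε) := Real.rpow_pos_of_pos hx0 _
    have hyp : 0 < y^(1+ε) := Real.rpow_pos_of_pos hy0 _
    have hq : 2*x^(ε-1)*(y^(-(1+ε))) = 2/(x^(1-ε) * y^(1+ε)) := by
      rw [Real.rpow_neg hy0.le, show (ε-1) = -(1-ε) by ring, Real.rpow_neg hx0.le]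
      field_simp
    rw [hq, div_le_div_iff₀ ha (by positivity)]
    nlinarith [key]

/-- Vertex function estimate: the defining series converges absolutely for each `σ > 0`, and
for every `ε ∈ (0,1]` there is `C > 0` with `∫₀^∞ |V(σ, k₁)| dσ ≤ C |k₁|^ε` for all
`k₁ ≠ 0`. -/
theorem stmt7 (ε : ℝ) (hε0 : 0 < ε) (hε1 : ε ≤ 1) :
    (∀ σ : ℝ, 0 < σ → ∀ k₁ : ℤ, Summable (fun k₂ : ℤ =>
      ‖(if k₂ ≠ 0 then Hker σ (k₁ + k₂) * Complex.exp (-(k₂ : ℂ) ^ 2 * (σ : ℂ)) else 0)‖)) ∧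
    ∃ C : ℝ, 0 < C ∧ ∀ k₁ : ℤ, k₁ ≠ 0 →
      (∫⁻ σ in Set.Ioi (0:ℝ), ENNReal.ofReal ‖Vfun σ k₁‖)
        ≤ ENNReal.ofReal (C * |(k₁ : ℝ)| ^ ε) := by
  refine ⟨fun σ hσ k₁ => sum_norm σ hσ k₁, ?_⟩
  set S : ℝ := ∑' n : ℤ, |(n:ℝ)| ^ (-(1+ε)) with hSdef
  have hSsum : Summable (fun n : ℤ => |(n:ℝ)| ^ (-(1+ε))) :=
    Real.summable_abs_int_rpow (by linarith)
  have hS0 : 0 ≤ S := tsum_nonneg (fun n => Real.rpow_nonneg (abs_nonneg _) _)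
  refine ⟨(S+1)/2, by linarith, ?_⟩
  intro k₁ hk₁
  have hx : (1:ℝ) ≤ |(k₁:ℝ)| := by
    rw [← Int.cast_abs]; exact_mod_cast Int.one_le_abs hk₁
  have hx0 : (0:ℝ) < |(k₁:ℝ)| := by linarith
  set c : ℝ := |(k₁:ℝ)|/4 with hcdef
  have hc0 : 0 ≤ c := by positivity
  set A : ℤ → ℝ := fun k₂ => ((k₁:ℝ)+(k₂:ℝ))^2+(k₂:ℝ)^2 with hAdef
  have hA : ∀ k₂, 0 < A k₂ := by
    intro k₂
    rcases eq_or_ne k₂ 0 with h | h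
    · have h1 : (k₁:ℝ) ≠ 0 := Int.cast_ne_zero.mpr hk₁
      have h2 : A k₂ = (k₁:ℝ)^2 := by rw [hAdef, h]; push_cast; ring
      rw [h2]; positivity
    · have h1 : (k₂:ℝ) ≠ 0 := Int.cast_ne_zero.mpr h
      rw [hAdef]; positivity
  -- step 1 : pointwise bound inside the integral
  have step1 : (∫⁻ σ in Set.Ioi (0:ℝ), ENNReal.ofReal ‖Vfun σ k₁‖)
      ≤ ∫⁻ σ in Set.Ioi (0:ℝ), ∑' k₂ : ℤ, ENNReal.ofReal (c * gfun σ k₁ k₂) := by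
    refine lintegral_mono_ae ?_
    filter_upwards [self_mem_ae_restrict measurableSet_Ioi] with σ hσ
    have h1 : ‖Vfun σ k₁‖ ≤ c * ∑' k₂, gfun σ k₁ k₂ := keybound σ hσ k₁
    calc ENNReal.ofReal ‖Vfun σ k₁‖ ≤ ENNReal.ofReal (c * ∑' k₂, gfun σ k₁ k₂) :=
          ENNReal.ofReal_le_ofReal h1
      _ = ENNReal.ofReal (∑' k₂, c * gfun σ k₁ k₂) := by rw [tsum_mul_left]
      _ = ∑' k₂, ENNReal.ofReal (c * gfun σ k₁ k₂) := by
          exact ENNReal.ofReal_tsum_of_nonneg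
            (fun k₂ => mul_nonneg hc0 (Real.exp_pos _).le) ((sum_g σ hσ k₁).mul_left c)
  -- step 2 : swap sum and integral, compute each integral
  have step2 : (∫⁻ σ in Set.Ioi (0:ℝ), ∑' k₂ : ℤ, ENNReal.ofReal (c * gfun σ k₁ k₂))
      = ∑' k₂ : ℤ, ENNReal.ofReal c * ENNReal.ofReal (1/(A k₂)) := by
    rw [lintegral_tsum (fun k₂ => ?_)]
    · congr 1 with k₂
      have hg : ∀ σ : ℝ, gfun σ k₁ k₂ = Real.exp (-(A k₂) * σ) := fun σ => rfl
      simp_rw [hg, ENNReal.ofReal_mul hc0]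
      rw [lintegral_const_mul' _ _ ENNReal.ofReal_ne_top, lint_exp (A k₂) (hA k₂)]
    · apply Measurable.aemeasurable
      apply ENNReal.measurable_ofReal.comp
      apply Measurable.const_mul
      exact (Real.measurable_exp.comp (measurable_id.const_mul _))
  -- step 3 : sum bound via interpolation
  have step3 : (∑' k₂ : ℤ, ENNReal.ofReal c * ENNReal.ofReal (1/(A k₂)))
      ≤ ENNReal.ofReal c * ENNReal.ofReal (2*|(k₁:ℝ)|^(ε-1) * (S + 1)) := by
    rw [ENNReal.tsum_mul_left]
    apply mul_le_mul_right
    have hble : ∀ k₂ : ℤ, (1:ℝ)/(A k₂) ≤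
        2*|(k₁:ℝ)|^(ε-1) * (|(k₂:ℝ)|^(-(1+ε)) + (if k₂ = 0 then (1:ℝ) else 0)) :=
      fun k₂ => interp ε hε0 hε1 k₁ k₂ hk₁
    have hbnn : ∀ k₂ : ℤ, 0 ≤
        2*|(k₁:ℝ)|^(ε-1) * (|(k₂:ℝ)|^(-(1+ε)) + (if k₂ = 0 then (1:ℝ) else 0)) := by
      intro k₂
      have := Real.rpow_nonneg (abs_nonneg ((k₂:ℝ))) (-(1+ε))
      have := Real.rpow_nonneg (abs_nonneg ((k₁:ℝ))) (ε-1)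
      positivity
    have hbsum : Summable (fun k₂ : ℤ =>
        2*|(k₁:ℝ)|^(ε-1) * (|(k₂:ℝ)|^(-(1+ε)) + (if k₂ = 0 then (1:ℝ) else 0))) := by
      apply Summable.mul_left
      exact hSsum.add (summable_of_ne_finset_zero (s := {(0:ℤ)})
        (fun b hb => by rw [Finset.mem_singleton] at hb; simp [hb]))
    calc (∑' k₂ : ℤ, ENNReal.ofReal (1/(A k₂)))
        ≤ ∑' k₂ : ℤ, ENNReal.ofReal
            (2*|(k₁:ℝ)|^(ε-1) * (|(k₂:ℝ)|^(-(1+ε)) + (if k₂ = 0 then (1:ℝ) else 0))) :=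
          ENNReal.tsum_le_tsum (fun k₂ => ENNReal.ofReal_le_ofReal (hble k₂))
      _ = ENNReal.ofReal (∑' k₂ : ℤ,
            2*|(k₁:ℝ)|^(ε-1) * (|(k₂:ℝ)|^(-(1+ε)) + (if k₂ = 0 then (1:ℝ) else 0))) :=
          (ENNReal.ofReal_tsum_of_nonneg hbnn hbsum).symm
      _ = ENNReal.ofReal (2*|(k₁:ℝ)|^(ε-1) * (S + 1)) := by
          congr 1
          rw [tsum_mul_left]
          congr 1
          rw [Summable.tsum_add hSsum (summable_of_ne_finset_zero (s := {(0:ℤ)})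
            (fun b hb => by rw [Finset.mem_singleton] at hb; simp [hb])), ← hSdef]
          congr 1
          exact tsum_ite_eq (0:ℤ) (fun _ => (1:ℝ))
  -- final arithmetic
  have final : ENNReal.ofReal c * ENNReal.ofReal (2*|(k₁:ℝ)|^(ε-1) * (S + 1))
      = ENNReal.ofReal ((S+1)/2 * |(k₁:ℝ)| ^ ε) := by
    rw [← ENNReal.ofReal_mul hc0]
    congr 1
    have h7 : |(k₁:ℝ)| * |(k₁:ℝ)|^(ε-1) = |(k₁:ℝ)| ^ ε := by
      have := Real.rpow_add hx0 1 (ε-1)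
      rw [show (1:ℝ)+(ε-1) = ε by ring, Real.rpow_one] at this
      rw [← this]
    rw [hcdef]
    nlinarith [h7]
  calc (∫⁻ σ in Set.Ioi (0:ℝ), ENNReal.ofReal ‖Vfun σ k₁‖)
      ≤ ∑' k₂ : ℤ, ENNReal.ofReal c * ENNReal.ofReal (1/(A k₂)) := step2 ▸ step1
    _ ≤ ENNReal.ofReal ((S+1)/2 * |(k₁:ℝ)| ^ ε) := final ▸ step3
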